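/- For every positive integer n, the alternating group A_n has a basis. -/

import Mathlib

/-- A sequence `b : Fin n → G` of non-identity elements is a *basis* for the group `G`
if every `g ∈ G` is uniquely of the form `b 0 ^ a 0 * ⋯ * b (n-1) ^ a (n-1)`
with `a i ∈ {0, …, orderOf (b i) - 1}`. -/
def IsGroupBasis {G : Type*} [Group G] {n : ℕ} (b : Fin n → G) : Prop :=
  (∀ i, b i ≠ 1) ∧
    Function.Bijective (fun a : ∀ i, Fin (orderOf (b i)) =>
      (List.ofFn fun i => b i ^ ((a i : ℕ))).prod)

/-- `G` has a basis. -/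
def HasGroupBasis (G : Type*) [Group G] : Prop :=
  ∃ (n : ℕ) (b : Fin n → G), IsGroupBasis b

namespace AltBasis
open Equiv Equiv.Perm

variable {n : ℕ}

def rotF (a b x : ℕ) : ℕ := if x < a ∨ b ≤ x then x else if x + 1 = b then a else x + 1
def rotG (a b x : ℕ) : ℕ := if x < a ∨ b ≤ x then x else if x = a then b - 1 else x - 1

def rot (a b : ℕ) (hb : b ≤ n) : Equiv.Perm (Fin n) where
  toFun x := ⟨rotF a b x, by unfold rotF; have := x.isLt; split_ifs <;> omega⟩
  invFun x := ⟨rotG a b x, by unfold rotG; have := x.isLt; split_ifs <;> omega⟩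
  left_inv x := Fin.ext (by show rotG a b (rotF a b x) = x; unfold rotF rotG; have := x.isLt; split_ifs <;> omega)
  right_inv x := Fin.ext (by show rotF a b (rotG a b x) = x; unfold rotF rotG; have := x.isLt; split_ifs <;> omega)

lemma rot_apply_val (a b : ℕ) (hb : b ≤ n) (x : Fin n) : (rot a b hb x : ℕ) = rotF a b x := rfl

lemma rot_apply_out (a b : ℕ) (hb : b ≤ n) (x : Fin n) (hx : (x : ℕ) < a ∨ b ≤ (x : ℕ)) :
    rot a b hb x = x := Fin.ext (by rw [rot_apply_val]; unfold rotF; rw [if_pos hx])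

lemma pow_fix (σ : Equiv.Perm (Fin n)) (x : Fin n) (h : σ x = x) (j : ℕ) : (σ ^ j) x = x := by
  induction j with
  | zero => rfl
  | succ j ih => rw [pow_succ, Equiv.Perm.mul_apply, h, ih]

lemma rot_pow_apply (a b : ℕ) (hab : a < b) (hb : b ≤ n) (j : ℕ) (x : Fin n)
    (hx1 : a ≤ (x : ℕ)) (hx2 : (x : ℕ) < b) :
    (((rot a b hb) ^ j) x : ℕ) = a + (((x : ℕ) - a + j) % (b - a)) := by
  induction j with
  | zero => rw [pow_zero, Equiv.Perm.one_apply, Nat.mod_eq_of_lt (by omega)]; omega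
  | succ j ih =>
    rw [pow_succ', Equiv.Perm.mul_apply]
    set w := ((x : ℕ) - a + j) % (b - a) with hw
    have hwlt : w < b - a := Nat.mod_lt _ (by omega)
    have hv : ((rot a b hb ^ j) x) = ⟨a + w, by omega⟩ := Fin.ext ih
    rw [hv, rot_apply_val]
    have key : ((x : ℕ) - a + (j + 1)) % (b - a) = (w + 1) % (b - a) := by
      rw [hw, Nat.mod_add_mod, Nat.add_assoc]
    rw [key]
    unfold rotF
    rw [if_neg (by omega)]
    by_cases hlast : w + 1 = b - a
    · rw [if_pos (by omega), hlast, Nat.mod_self]; omega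
    · rw [if_neg (by omega)]
      have : (w + 1) % (b - a) = w + 1 := Nat.mod_eq_of_lt (by omega)
      omega

lemma rot_pow_card (a b : ℕ) (hab : a < b) (hb : b ≤ n) : (rot a b hb) ^ (b - a) = 1 := by
  ext x
  rcases lt_or_ge (x : ℕ) a with h | h
  · rw [Equiv.Perm.one_apply, pow_fix _ _ (rot_apply_out a b hb x (Or.inl h))]
  rcases le_or_gt b (x : ℕ) with h2 | h2
  · rw [Equiv.Perm.one_apply, pow_fix _ _ (rot_apply_out a b hb x (Or.inr h2))]
  · rw [Equiv.Perm.one_apply]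
    rw [rot_pow_apply a b hab hb _ x h h2, Nat.add_mod_right, Nat.mod_eq_of_lt (by omega)]
    omega

lemma orderOf_rot (a b : ℕ) (hab : a < b) (hb : b ≤ n) : orderOf (rot a b hb) = b - a := by
  rw [orderOf_eq_iff (by omega)]
  refine ⟨rot_pow_card a b hab hb, fun m hm hm0 heq => ?_⟩
  have h1 : ((rot a b hb ^ m) ⟨a, by omega⟩ : ℕ) = a + (a - a + m) % (b - a) :=
    rot_pow_apply a b hab hb m ⟨a, by omega⟩ (le_refl a) hab
  rw [heq] at h1
  rw [Equiv.Perm.one_apply] at h1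
  simp only [Nat.sub_self, Nat.zero_add] at h1
  rw [Nat.mod_eq_of_lt hm] at h1
  omega

lemma rot_eq_one (a b : ℕ) (hb : b ≤ n) (h : b ≤ a + 1) : rot a b hb = 1 := by
  ext x
  rw [Equiv.Perm.one_apply]
  rw [rot_apply_val]
  unfold rotF
  split_ifs <;> omega

lemma rot_succ (a b : ℕ) (hab : a < b) (hb : b + 1 ≤ n) :
    rot a (b + 1) hb = rot a b (by omega) * Equiv.swap ⟨b - 1, by omega⟩ ⟨b, by omega⟩ := by
  ext x
  rw [Equiv.Perm.mul_apply]
  by_cases hxp : x = (⟨b - 1, by omega⟩ : Fin n)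
  · rw [hxp, Equiv.swap_apply_left]
    rw [rot_apply_out a b _ _ (Or.inr (le_refl b))]
    rw [rot_apply_val]
    unfold rotF
    simp only [Fin.val_mk]
    split_ifs <;> omega
  by_cases hxq : x = (⟨b, by omega⟩ : Fin n)
  · rw [hxq, Equiv.swap_apply_right]
    rw [rot_apply_val, rot_apply_val]
    unfold rotF
    simp only [Fin.val_mk]
    split_ifs <;> omega
  · rw [Equiv.swap_apply_of_ne_of_ne hxp hxq]
    rw [rot_apply_val, rot_apply_val]
    have hne1 : (x : ℕ) ≠ b - 1 := fun h => hxp (Fin.ext h)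
    have hne2 : (x : ℕ) ≠ b := fun h => hxq (Fin.ext h)
    unfold rotF
    split_ifs <;> omega

lemma sign_rot (a : ℕ) : ∀ (b : ℕ) (hab : a < b) (hb : b ≤ n),
    Equiv.Perm.sign (rot a b hb) = (-1) ^ (b - a - 1) := by
  intro b
  induction b with
  | zero => omega
  | succ B ih =>
    intro hab hb
    rcases le_or_gt B a with hBa | hBa
    · have hBa' : B = a := by omega
      rw [rot_eq_one a (B + 1) hb (by omega), map_one, hBa']
      simp
    · rw [rot_succ a B hBa hb, map_mul, ih hBa (by omega),
        Equiv.Perm.sign_swap (by intro h; rw [Fin.mk.injEq] at h; omega)]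
      rw [show B + 1 - a - 1 = (B - a - 1) + 1 by omega, pow_succ]

def P {G : Type*} [Group G] {m : ℕ} (b : Fin m → G) (a : ∀ i, Fin (orderOf (b i))) : G :=
  (List.ofFn fun i => b i ^ ((a i : ℕ))).prod

section Ext
variable {G : Type*} [Group G] {m : ℕ} {b : Fin m → G} {S T : Set G}

theorem ext_step (hinj : Function.Injective (P b)) (hrange : Set.range (P b) = S) (c : G)
    (hstep_inj : Function.Injective
      (fun p : S × Fin (orderOf c) => (p.1 : G) * c ^ ((p.2 : ℕ))))
    (hstep_range : Set.range
      (fun p : S × Fin (orderOf c) => (p.1 : G) * c ^ ((p.2 : ℕ))) = T) :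
    Function.Injective (P (Fin.snoc b c)) ∧ Set.range (P (Fin.snoc b c)) = T := by
  set b' : Fin (m + 1) → G := Fin.snoc b c with hb'
  have hcast : ∀ i : Fin m, orderOf (b' i.castSucc) = orderOf (b i) := fun i => by
    rw [hb', Fin.snoc_castSucc]
  have hlast : orderOf (b' (Fin.last m)) = orderOf c := by rw [hb', Fin.snoc_last]
  set restr : (∀ i, Fin (orderOf (b' i))) → (∀ i, Fin (orderOf (b i))) :=
    fun a i => Fin.cast (hcast i) (a i.castSucc) with hrestr
  have key : ∀ a, P b' a = P b (restr a) * c ^ ((a (Fin.last m) : ℕ)) := by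
    intro a
    unfold P
    rw [List.ofFn_succ', List.prod_concat]
    congr 1
    · exact congrArg List.prod (congrArg List.ofFn (funext fun i => by
        simp [hb', hrestr, Fin.snoc_castSucc]))
    · simp [hb', Fin.snoc_last]
  have hmem : ∀ a, P b (restr a) ∈ S := fun a => hrange ▸ Set.mem_range_self _
  constructor
  · intro a₁ a₂ h
    rw [key, key] at h
    have h2 := hstep_inj (a₁ := (⟨_, hmem a₁⟩, Fin.cast hlast (a₁ (Fin.last m))))
      (a₂ := (⟨_, hmem a₂⟩, Fin.cast hlast (a₂ (Fin.last m)))) (by simpa using h)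
    have h3 : P b (restr a₁) = P b (restr a₂) := congrArg (Subtype.val ∘ Prod.fst) h2
    have h4 := hinj h3
    have h5 : ((a₁ (Fin.last m)) : ℕ) = ((a₂ (Fin.last m)) : ℕ) := by
      have := congrArg Prod.snd h2
      simpa using congrArg Fin.val this
    funext i
    induction i using Fin.lastCases with
    | last => exact Fin.ext h5
    | cast i =>
      refine Fin.ext ?_
      have := congrArg Fin.val (congrFun h4 i)
      simpa [hrestr] using this
  · ext g
    constructor
    · rintro ⟨a, rfl⟩
      rw [key]
      rw [← hstep_range]
      exact ⟨(⟨_, hmem a⟩, Fin.cast hlast (a (Fin.last m))), by simp⟩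
    · intro hg
      rw [← hstep_range] at hg
      obtain ⟨⟨s, j⟩, hsj⟩ := hg
      have hs : (s : G) ∈ Set.range (P b) := hrange.symm ▸ s.2
      obtain ⟨a₀, ha₀⟩ := hs
      refine ⟨Fin.lastCases (Fin.cast hlast.symm j) (fun i => Fin.cast (hcast i).symm (a₀ i)), ?_⟩
      rw [key]
      have h1 : restr (Fin.lastCases (Fin.cast hlast.symm j)
          (fun i => Fin.cast (hcast i).symm (a₀ i))) = a₀ := by
        funext i
        refine Fin.ext ?_
        simp [hrestr]
      rw [h1, ha₀]
      simpa using hsj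

theorem ext_step2 (hinj : Function.Injective (P b)) (hrange : Set.range (P b) = S)
    (c₁ c₂ : G) (ho₂ : 0 < orderOf c₂)
    (hstep_inj : Function.Injective
      (fun p : S × Fin (orderOf c₁) × Fin (orderOf c₂) =>
        (p.1 : G) * c₁ ^ ((p.2.1 : ℕ)) * c₂ ^ ((p.2.2 : ℕ))))
    (hstep_range : Set.range
      (fun p : S × Fin (orderOf c₁) × Fin (orderOf c₂) =>
        (p.1 : G) * c₁ ^ ((p.2.1 : ℕ)) * c₂ ^ ((p.2.2 : ℕ))) = T) :
    Function.Injective (P (Fin.snoc (Fin.snoc b c₁) c₂)) ∧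
      Set.range (P (Fin.snoc (Fin.snoc b c₁) c₂)) = T := by
  set S' : Set G := Set.range (fun p : S × Fin (orderOf c₁) => (p.1 : G) * c₁ ^ ((p.2 : ℕ)))
    with hS'
  have inj1 : Function.Injective
      (fun p : S × Fin (orderOf c₁) => (p.1 : G) * c₁ ^ ((p.2 : ℕ))) := by
    intro p q h
    have h2 := hstep_inj (a₁ := (p.1, p.2, ⟨0, ho₂⟩)) (a₂ := (q.1, q.2, ⟨0, ho₂⟩))
      (by simpa using h)
    obtain ⟨h3, h4⟩ := Prod.mk.injEq .. ▸ h2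
    exact Prod.ext (by rw [h3]) (congrArg Prod.fst h4)
  obtain ⟨I1, R1⟩ := ext_step hinj hrange c₁ inj1 hS'.symm
  have inj2 : Function.Injective
      (fun p : S' × Fin (orderOf c₂) => (p.1 : G) * c₂ ^ ((p.2 : ℕ))) := by
    rintro ⟨⟨s₁, hs₁⟩, j₁⟩ ⟨⟨s₂, hs₂⟩, j₂⟩ h
    obtain ⟨⟨t₁, i₁⟩, rfl⟩ := hs₁
    obtain ⟨⟨t₂, i₂⟩, rfl⟩ := hs₂
    simp only at h
    have h2 := hstep_inj (a₁ := (t₁, i₁, j₁)) (a₂ := (t₂, i₂, j₂)) (by simpa using h)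
    have ht : t₁ = t₂ := congrArg Prod.fst h2
    have hi : i₁ = i₂ := congrArg (Prod.fst ∘ Prod.snd) h2
    have hj : j₁ = j₂ := congrArg (Prod.snd ∘ Prod.snd) h2
    subst ht; subst hi; subst hj; rfl
  have range2 : Set.range
      (fun p : S' × Fin (orderOf c₂) => (p.1 : G) * c₂ ^ ((p.2 : ℕ))) = T := by
    rw [← hstep_range]
    ext g
    constructor
    · rintro ⟨⟨⟨s, hs⟩, j⟩, rfl⟩
      obtain ⟨⟨t, i⟩, rfl⟩ := hs
      exact ⟨(t, i, j), rfl⟩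
    · rintro ⟨⟨t, i, j⟩, rfl⟩
      exact ⟨(⟨_, ⟨(t, i), rfl⟩⟩, j), rfl⟩
  exact ext_step I1 R1 c₂ inj2 range2

theorem _root_.Equiv.Perm.apply_inv_self {α : Type*} (f : Equiv.Perm α) (x : α) :
    f (f⁻¹ x) = x := Equiv.apply_symm_apply f x

theorem _root_.Equiv.Perm.inv_apply_self {α : Type*} (f : Equiv.Perm α) (x : α) :
    f⁻¹ (f x) = x := Equiv.symm_apply_apply f x

def Sk (n k : ℕ) : Set (Equiv.Perm (Fin n)) :=
  {σ | Equiv.Perm.sign σ = 1 ∧ ∀ j : Fin n, k ≤ (j : ℕ) → σ j = j}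

theorem coset_step {n k : ℕ} (hk : k < n) {ι : Type} (t : ι → Equiv.Perm (Fin n))
    (hsign : ∀ r, Equiv.Perm.sign (t r) = 1)
    (hfix : ∀ r (j : Fin n), k + 1 ≤ (j : ℕ) → t r j = j)
    (hval : ∀ v : Fin n, (v : ℕ) ≤ k → ∃! r, (t r)⁻¹ ⟨k, hk⟩ = v) :
    Function.Injective (fun p : (Sk n k) × ι => (p.1 : Equiv.Perm (Fin n)) * t p.2) ∧
      Set.range (fun p : (Sk n k) × ι => (p.1 : Equiv.Perm (Fin n)) * t p.2) = Sk n (k + 1) := by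
  have hinvfix : ∀ r (j : Fin n), k + 1 ≤ (j : ℕ) → (t r)⁻¹ j = j := by
    intro r j hj
    have := hfix r j hj
    conv_lhs => rw [← this]
    exact Equiv.Perm.inv_apply_self _ _
  have hvle : ∀ r, (((t r)⁻¹ ⟨k, hk⟩ : Fin n) : ℕ) ≤ k := by
    intro r
    by_contra hgt
    have h1 := hfix r ((t r)⁻¹ ⟨k, hk⟩) (by omega)
    rw [Equiv.Perm.apply_inv_self] at h1
    have := congrArg Fin.val h1
    simp only [Fin.val_mk] at this
    omega
  constructor
  · rintro ⟨s₁, r₁⟩ ⟨s₂, r₂⟩ h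
    simp only at h
    have hsfix : ∀ s : Sk n k, ((s : Equiv.Perm (Fin n)))⁻¹ ⟨k, hk⟩ = ⟨k, hk⟩ := by
      intro s
      have := s.2.2 ⟨k, hk⟩ (le_refl k)
      conv_lhs => rw [← this]
      exact Equiv.Perm.inv_apply_self _ _
    have hv : (t r₁)⁻¹ ⟨k, hk⟩ = (t r₂)⁻¹ ⟨k, hk⟩ := by
      have h2 : ((s₁ : Equiv.Perm (Fin n)) * t r₁)⁻¹ ⟨k, hk⟩ =
          ((s₂ : Equiv.Perm (Fin n)) * t r₂)⁻¹ ⟨k, hk⟩ := by rw [h]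
      simpa [mul_inv_rev, Equiv.Perm.mul_apply, hsfix] using h2
    obtain ⟨r, -, huniq⟩ := hval _ (hvle r₁)
    have hr1 : r₁ = r := huniq r₁ rfl
    have hr2 : r₂ = r := huniq r₂ hv.symm
    have hre : r₁ = r₂ := by rw [hr1, hr2]
    subst hre
    have : (s₁ : Equiv.Perm (Fin n)) = s₂ := mul_right_cancel h
    exact Prod.ext (Subtype.ext this) rfl
  · ext σ
    constructor
    · rintro ⟨⟨s, r⟩, rfl⟩
      refine ⟨?_, ?_⟩
      · simp only [map_mul, s.2.1, hsign, one_mul]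
      · intro j hj
        simp only [Equiv.Perm.mul_apply]
        rw [hfix r j hj, s.2.2 j (by omega)]
    · intro hσ
      set v : Fin n := σ⁻¹ ⟨k, hk⟩ with hvdef
      have hv : (v : ℕ) ≤ k := by
        by_contra hgt
        have h1 := hσ.2 v (by omega)
        rw [hvdef, Equiv.Perm.apply_inv_self] at h1
        have := congrArg Fin.val h1
        simp only [Fin.val_mk, hvdef] at this
        omega
      obtain ⟨r, hr, -⟩ := hval v hv
      refine ⟨(⟨σ * (t r)⁻¹, ?_, ?_⟩, r), ?_⟩
      · simp only [map_mul, map_inv, hσ.1, hsign, one_mul, inv_one]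
      · intro j hj
        rcases Nat.lt_or_ge (k : ℕ) (j : ℕ) with hj1 | hj1
        · have hfj : (t r)⁻¹ j = j := hinvfix r j (by omega)
          have hsj : σ j = j := hσ.2 j (by omega)
          simp only [Equiv.Perm.mul_apply]
          rw [hfj, hsj]
        · have hjk : j = (⟨k, hk⟩ : Fin n) := Fin.ext (by simp only [Fin.val_mk]; omega)
          simp only [Equiv.Perm.mul_apply, hjk]
          rw [hr, hvdef, Equiv.Perm.apply_inv_self]
      · simp [inv_mul_cancel_right]

lemma Sk_two {n : ℕ} : Sk n 2 = {1} := by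
  ext σ
  constructor
  · rintro ⟨hsgn, hfix⟩
    by_contra hne
    have hne1 : σ ≠ 1 := hne
    have hsub : σ.support ⊆ Finset.filter (fun x : Fin n => (x : ℕ) < 2) Finset.univ := by
      intro x hx
      rw [Equiv.Perm.mem_support] at hx
      simp only [Finset.mem_filter, Finset.mem_univ, true_and]
      by_contra h2
      exact hx (hfix x (by omega))
    have hcard2 : (Finset.filter (fun x : Fin n => (x : ℕ) < 2) Finset.univ).card ≤ 2 := by
      have h := Finset.card_le_card_of_injOn (s := Finset.filter (fun x : Fin n => (x : ℕ) < 2) Finset.univ)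
        (t := Finset.range 2) (fun x : Fin n => (x : ℕ))
        (fun x hx => by
          have := (Finset.mem_filter.1 hx).2
          simp only [Finset.mem_range, Finset.coe_range, Set.mem_Iio]
          omega)
        (fun x _ y _ h => Fin.ext h)
      simpa using h
    have hcard : σ.support.card ≤ 2 := le_trans (Finset.card_le_card hsub) hcard2
    have hne0 : σ.support.card ≠ 0 := by
      simp only [ne_eq, Finset.card_eq_zero, Equiv.Perm.support_eq_empty_iff]
      exact hne1
    have hne1' := Equiv.Perm.card_support_ne_one σ
    have h2 : σ.support.card = 2 := by omega
    have hswap := Equiv.Perm.card_support_eq_two.1 h2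
    obtain ⟨x, y, hxy, rfl⟩ := hswap
    rw [Equiv.Perm.sign_swap hxy] at hsgn
    exact absurd hsgn (by decide)
  · rintro rfl
    exact ⟨by simp, fun j _ => rfl⟩


theorem lift {n m : ℕ} (b : Fin m → Equiv.Perm (Fin n)) (hb1 : ∀ i, b i ≠ 1)
    (hsgn : ∀ i, Equiv.Perm.sign (b i) = 1)
    (hinj : Function.Injective (P b))
    (hrange : Set.range (P b) = {σ : Equiv.Perm (Fin n) | Equiv.Perm.sign σ = 1}) :
    ∃ (b' : Fin m → alternatingGroup (Fin n)), IsGroupBasis b' := by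
  set b' : Fin m → alternatingGroup (Fin n) :=
    fun i => ⟨b i, Equiv.Perm.mem_alternatingGroup.2 (hsgn i)⟩ with hb'
  have hord : ∀ i, orderOf (b' i) = orderOf (b i) := fun i => Subgroup.orderOf_mk _ _
  have hcoe : ∀ a : ∀ i, Fin (orderOf (b' i)),
      ((List.ofFn fun i => b' i ^ ((a i : ℕ))).prod : Equiv.Perm (Fin n)) =
        P b (fun i => Fin.cast (hord i) (a i)) := by
    intro a
    rw [SubmonoidClass.coe_list_prod, List.map_ofFn]
    unfold P
    refine congrArg List.prod (congrArg List.ofFn (funext fun i => ?_))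
    simp [hb']
  refine ⟨b', fun i => ?_, ?_, ?_⟩
  · intro h
    exact hb1 i (by simpa [hb', Subtype.ext_iff] using h)
  · intro a₁ a₂ h
    have h2 : P b (fun i => Fin.cast (hord i) (a₁ i)) = P b (fun i => Fin.cast (hord i) (a₂ i)) := by
      rw [← hcoe, ← hcoe]
      exact congrArg Subtype.val h
    have h3 := hinj h2
    funext i
    have h4 := congrArg Fin.val (congrFun h3 i)
    simp only [Fin.coe_cast] at h4
    exact Fin.ext h4
  · intro g
    have hg : (g : Equiv.Perm (Fin n)) ∈ Set.range (P b) := by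
      rw [hrange]
      exact Equiv.Perm.mem_alternatingGroup.1 g.2
    obtain ⟨a₀, ha₀⟩ := hg
    refine ⟨fun i => Fin.cast (hord i).symm (a₀ i), ?_⟩
    refine Subtype.ext ?_
    rw [hcoe]
    convert ha₀ using 2
    exact funext fun i => Fin.ext rfl

end Ext

lemma modh1 {d v r : ℕ} (hv : v < d) (hr : r < d) : (v + r) % d = d - 1 ↔ r = d - 1 - v := by
  rcases Nat.lt_or_ge (v + r) d with h | h
  · rw [Nat.mod_eq_of_lt h]; omega
  · rw [Nat.mod_eq_sub_mod h, Nat.mod_eq_of_lt (by omega)]; omega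

lemma modh2 {d v r : ℕ} (hv : v < d) (hr : r < d) : (v + r) % d = 0 ↔ r = (d - v) % d := by
  rcases Nat.eq_zero_or_pos v with rfl | hv0
  · rw [Nat.zero_add, Nat.mod_eq_of_lt hr, Nat.sub_zero, Nat.mod_self]
  · rw [Nat.mod_eq_of_lt (show d - v < d by omega)]
    rcases Nat.lt_or_ge (v + r) d with h | h
    · rw [Nat.mod_eq_of_lt h]; omega
    · rw [Nat.mod_eq_sub_mod h, Nat.mod_eq_of_lt (show v + r - d < d by omega)]; omega

lemma ne_one_of_orderOf {G : Type*} [Group G] {c : G} {d : ℕ} (h : orderOf c = d)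
    (hd : 2 ≤ d) : c ≠ 1 := fun h1 => by rw [h1, orderOf_one] at h; omega

lemma inv_apply_eq_iff {n : ℕ} (σ : Equiv.Perm (Fin n)) (x v : Fin n) :
    σ⁻¹ x = v ↔ σ v = x := by
  rw [Equiv.Perm.inv_eq_iff_eq]; exact eq_comm

lemma odd_step {n k : ℕ} (hk : 2 ≤ k) (hkn : k < n) (heven : k % 2 = 0) :
    ∃ c : Equiv.Perm (Fin n), c ≠ 1 ∧ Equiv.Perm.sign c = 1 ∧
      Function.Injective (fun p : (Sk n k) × Fin (orderOf c) =>
        (p.1 : Equiv.Perm (Fin n)) * c ^ ((p.2 : ℕ))) ∧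
      Set.range (fun p : (Sk n k) × Fin (orderOf c) =>
        (p.1 : Equiv.Perm (Fin n)) * c ^ ((p.2 : ℕ))) = Sk n (k + 1) := by
  have hkn' : k + 1 ≤ n := hkn
  set c : Equiv.Perm (Fin n) := rot 0 (k + 1) hkn' with hc
  have ho : orderOf c = k + 1 := by
    rw [hc, orderOf_rot 0 (k + 1) (by omega) hkn']
    omega
  have hsgn : Equiv.Perm.sign c = 1 := by
    rw [hc, sign_rot 0 (k + 1) (by omega) hkn']
    simp only [Nat.sub_zero, Nat.add_sub_cancel]
    exact Even.neg_one_pow (Nat.even_iff.2 heven)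
  have hfix : ∀ (r : Fin (orderOf c)) (j : Fin n), k + 1 ≤ (j : ℕ) →
      (c ^ ((r : ℕ))) j = j := fun r j hj =>
    pow_fix c j (rot_apply_out 0 (k + 1) hkn' j (Or.inr hj)) _
  have happly : ∀ (r : ℕ) (v : Fin n), (v : ℕ) ≤ k → ((c ^ r) v : ℕ) = ((v : ℕ) + r) % (k + 1) := by
    intro r v hv
    rw [hc, rot_pow_apply 0 (k + 1) (by omega) hkn' r v (by omega) (by omega)]
    simp
  have hval : ∀ v : Fin n, (v : ℕ) ≤ k →
      ∃! r : Fin (orderOf c), ((fun r : Fin (orderOf c) => c ^ ((r : ℕ))) r)⁻¹ ⟨k, hkn⟩ = v := by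
    intro v hv
    have key : ∀ r : Fin (orderOf c), ((c ^ ((r : ℕ)))⁻¹ ⟨k, hkn⟩ = v ↔ (r : ℕ) = k - (v : ℕ)) := by
      intro r
      rw [inv_apply_eq_iff]
      have hrlt : (r : ℕ) < k + 1 := by have := r.isLt; omega
      constructor
      · intro h
        have h2 := congrArg Fin.val h
        rw [happly _ v hv] at h2
        simp only [Fin.val_mk] at h2
        have := (modh1 (v := (v : ℕ)) (d := k + 1) (by omega) hrlt).1 (by omega)
        omega
      · intro h
        refine Fin.ext ?_
        rw [happly _ v hv]
        simp only [Fin.val_mk]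
        have := (modh1 (v := (v : ℕ)) (d := k + 1) (by omega) hrlt).2 (by omega)
        omega
    refine ⟨⟨k - (v : ℕ), by omega⟩, ?_, ?_⟩
    · exact (key _).2 rfl
    · intro r hr
      exact Fin.ext ((key r).1 hr)
  obtain ⟨I, R⟩ := coset_step hkn (fun r : Fin (orderOf c) => c ^ ((r : ℕ)))
    (fun r => by rw [map_pow, hsgn, one_pow]) hfix hval
  exact ⟨c, ne_one_of_orderOf ho (by omega), hsgn, I, R⟩

lemma even_step {n k : ℕ} (hk : 2 ≤ k) (hkn : k < n) (hodd : k % 2 = 1) :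
    ∃ c₁ c₂ : Equiv.Perm (Fin n), c₁ ≠ 1 ∧ c₂ ≠ 1 ∧
      Equiv.Perm.sign c₁ = 1 ∧ Equiv.Perm.sign c₂ = 1 ∧ 0 < orderOf c₂ ∧
      Function.Injective (fun p : (Sk n k) × Fin (orderOf c₁) × Fin (orderOf c₂) =>
        (p.1 : Equiv.Perm (Fin n)) * c₁ ^ ((p.2.1 : ℕ)) * c₂ ^ ((p.2.2 : ℕ))) ∧
      Set.range (fun p : (Sk n k) × Fin (orderOf c₁) × Fin (orderOf c₂) =>
        (p.1 : Equiv.Perm (Fin n)) * c₁ ^ ((p.2.1 : ℕ)) * c₂ ^ ((p.2.2 : ℕ))) = Sk n (k + 1) := by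
  have hk3 : 3 ≤ k := by omega
  set m : ℕ := (k + 1) / 2 with hmdef
  have hm : k + 1 = 2 * m := by omega
  have hm2 : 2 ≤ m := by omega
  have h2mn : 2 * m ≤ n := by omega
  have hmn : m ≤ n := by omega
  -- the four relevant points
  have h0n : 0 < n := by omega
  have h1n : 1 < n := by omega
  have h2n : 2 < n := by omega
  set s₁ : Equiv.Perm (Fin n) := Equiv.swap ⟨k, hkn⟩ ⟨0, h0n⟩ with hs₁
  set s₂ : Equiv.Perm (Fin n) := Equiv.swap ⟨1, h1n⟩ ⟨2, h2n⟩ with hs₂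
  set c₁ : Equiv.Perm (Fin n) := s₁ * s₂ with hc₁
  set r₁ : Equiv.Perm (Fin n) := rot 0 m hmn with hr₁
  set r₂ : Equiv.Perm (Fin n) := rot m (2 * m) h2mn with hr₂
  set c₂ : Equiv.Perm (Fin n) := r₁ * r₂ with hc₂
  -- basic values of c₁
  have nek1 : (⟨k, hkn⟩ : Fin n) ≠ ⟨1, h1n⟩ := by simp only [ne_eq, Fin.mk.injEq]; omega
  have nek2 : (⟨k, hkn⟩ : Fin n) ≠ ⟨2, h2n⟩ := by simp only [ne_eq, Fin.mk.injEq]; omega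
  have ne01 : (⟨0, h0n⟩ : Fin n) ≠ ⟨1, h1n⟩ := by simp only [ne_eq, Fin.mk.injEq]; omega
  have ne02 : (⟨0, h0n⟩ : Fin n) ≠ ⟨2, h2n⟩ := by simp only [ne_eq, Fin.mk.injEq]; omega
  have nek0 : (⟨k, hkn⟩ : Fin n) ≠ ⟨0, h0n⟩ := by simp only [ne_eq, Fin.mk.injEq]; omega
  have ne12 : (⟨1, h1n⟩ : Fin n) ≠ ⟨2, h2n⟩ := by simp only [ne_eq, Fin.mk.injEq]; omega
  have hc₁k : c₁ ⟨k, hkn⟩ = ⟨0, h0n⟩ := by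
    rw [hc₁, Equiv.Perm.mul_apply, hs₂, Equiv.swap_apply_of_ne_of_ne nek1 nek2,
      hs₁, Equiv.swap_apply_left]
  have hc₁0 : c₁ ⟨0, h0n⟩ = ⟨k, hkn⟩ := by
    rw [hc₁, Equiv.Perm.mul_apply, hs₂, Equiv.swap_apply_of_ne_of_ne ne01 ne02,
      hs₁, Equiv.swap_apply_right]
  have hc₁ne : c₁ ≠ 1 := by
    intro h
    have h2 := congrArg (fun σ : Equiv.Perm (Fin n) => σ ⟨k, hkn⟩) h
    simp only [Equiv.Perm.one_apply] at h2
    rw [hc₁k] at h2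
    exact nek0 h2.symm
  have hcomm₁ : Commute s₁ s₂ := by
    apply Equiv.Perm.Disjoint.commute
    intro x
    by_cases hx : x = (⟨k, hkn⟩ : Fin n) ∨ x = (⟨0, h0n⟩ : Fin n)
    · right
      rcases hx with rfl | rfl
      · exact Equiv.swap_apply_of_ne_of_ne nek1 nek2
      · exact Equiv.swap_apply_of_ne_of_ne ne01 ne02
    · left
      push_neg at hx
      exact Equiv.swap_apply_of_ne_of_ne hx.1 hx.2
  have hc₁sq : c₁ ^ 2 = 1 := by
    rw [pow_two, hc₁]
    calc s₁ * s₂ * (s₁ * s₂) = s₁ * (s₂ * s₁) * s₂ := by group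
    _ = s₁ * (s₁ * s₂) * s₂ := by rw [hcomm₁.eq]
    _ = (s₁ * s₁) * (s₂ * s₂) := by group
    _ = 1 := by rw [hs₁, hs₂, Equiv.swap_mul_self, Equiv.swap_mul_self, one_mul]
  have ho₁ : orderOf c₁ = 2 := orderOf_eq_prime hc₁sq hc₁ne
  have hsgn₁ : Equiv.Perm.sign c₁ = 1 := by
    rw [hc₁, map_mul, hs₁, hs₂, Equiv.Perm.sign_swap nek0, Equiv.Perm.sign_swap ne12]
    decide
  -- c₂ facts
  have hcomm₂ : Commute r₁ r₂ := by
    apply Equiv.Perm.Disjoint.commute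
    intro x
    rcases Nat.lt_or_ge (x : ℕ) m with hx | hx
    · right; exact rot_apply_out m (2 * m) h2mn x (Or.inl hx)
    · left; exact rot_apply_out 0 m hmn x (Or.inr hx)
  have hc₂pow : ∀ j : ℕ, c₂ ^ j = r₁ ^ j * r₂ ^ j := fun j => hcomm₂.mul_pow j
  have hr₁card : r₁ ^ m = 1 := by
    have := rot_pow_card 0 m (by omega) hmn
    simpa using this
  have hr₂card : r₂ ^ m = 1 := by
    have := rot_pow_card m (2 * m) (by omega) h2mn
    rwa [show 2 * m - m = m by omega] at this
  have hlo : ∀ (j : ℕ) (v : Fin n), (v : ℕ) < m → ((c₂ ^ j) v : ℕ) = ((v : ℕ) + j) % m := by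
    intro j v hv
    rw [hc₂pow, Equiv.Perm.mul_apply, pow_fix r₂ v (rot_apply_out m (2 * m) h2mn v (Or.inl hv)) j,
      hr₁, rot_pow_apply 0 m (by omega) hmn j v (by omega) hv]
    simp
  have hhi : ∀ (j : ℕ) (v : Fin n), m ≤ (v : ℕ) → (v : ℕ) < 2 * m →
      ((c₂ ^ j) v : ℕ) = m + (((v : ℕ) - m + j) % m) := by
    intro j v hv1 hv2
    rw [hc₂pow, Equiv.Perm.mul_apply]
    have hval : (r₂ ^ j) v = ⟨m + (((v : ℕ) - m + j) % m), by
        have := Nat.mod_lt ((v : ℕ) - m + j) (show 0 < m by omega); omega⟩ := by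
      refine Fin.ext ?_
      rw [hr₂, rot_pow_apply m (2 * m) (by omega) h2mn j v hv1 hv2,
        show 2 * m - m = m by omega]
    rw [hval, pow_fix r₁ _ (rot_apply_out 0 m hmn _ (Or.inr (by simp))) j]
  have ho₂ : orderOf c₂ = m := by
    rw [orderOf_eq_iff (by omega)]
    constructor
    · rw [hc₂pow, hr₁card, hr₂card, one_mul]
    · intro j hj hj0 hone
      have h1 : ((c₂ ^ j) ⟨0, h0n⟩ : ℕ) = (0 + j) % m := hlo j ⟨0, h0n⟩ (by simp; omega)
      rw [hone] at h1
      simp only [Equiv.Perm.one_apply, Fin.val_mk, Nat.zero_add] at h1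
      rw [Nat.mod_eq_of_lt hj] at h1
      omega
  have hc₂ne : c₂ ≠ 1 := ne_one_of_orderOf ho₂ hm2
  have hsgn₂ : Equiv.Perm.sign c₂ = 1 := by
    rw [hc₂, map_mul, hr₁, hr₂, sign_rot 0 m (by omega) hmn,
      sign_rot m (2 * m) (by omega) h2mn, show 2 * m - m - 1 = m - 1 by omega,
      Nat.sub_zero, ← pow_add]
    exact Even.neg_one_pow ⟨m - 1, by omega⟩
  -- transversal analysis
  have hfix : ∀ (p : Fin (orderOf c₁) × Fin (orderOf c₂)) (j : Fin n), k + 1 ≤ (j : ℕ) →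
      (c₁ ^ ((p.1 : ℕ)) * c₂ ^ ((p.2 : ℕ))) j = j := by
    intro p j hj
    have hjk : (j : ℕ) ≠ k := by omega
    have hne1 : j ≠ (⟨1, h1n⟩ : Fin n) := by simp only [ne_eq, Fin.ext_iff, Fin.val_mk]; omega
    have hne2 : j ≠ (⟨2, h2n⟩ : Fin n) := by simp only [ne_eq, Fin.ext_iff, Fin.val_mk]; omega
    have hnek : j ≠ (⟨k, hkn⟩ : Fin n) := by simp only [ne_eq, Fin.ext_iff, Fin.val_mk]; omega
    have hne0 : j ≠ (⟨0, h0n⟩ : Fin n) := by simp only [ne_eq, Fin.ext_iff, Fin.val_mk]; omega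
    have hfix₁ : c₁ j = j := by
      rw [hc₁, Equiv.Perm.mul_apply, hs₂, Equiv.swap_apply_of_ne_of_ne hne1 hne2,
        hs₁, Equiv.swap_apply_of_ne_of_ne hnek hne0]
    have hfix₂ : c₂ j = j := by
      rw [hc₂, Equiv.Perm.mul_apply, hr₂, rot_apply_out m (2 * m) h2mn j (Or.inr (by omega)),
        hr₁, rot_apply_out 0 m hmn j (Or.inr (by omega))]
    rw [Equiv.Perm.mul_apply, pow_fix c₂ j hfix₂, pow_fix c₁ j hfix₁]
  have hsgnt : ∀ p : Fin (orderOf c₁) × Fin (orderOf c₂),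
      Equiv.Perm.sign (c₁ ^ ((p.1 : ℕ)) * c₂ ^ ((p.2 : ℕ))) = 1 := by
    intro p
    rw [map_mul, map_pow, map_pow, hsgn₁, hsgn₂, one_pow, one_pow, one_mul]
  -- the key value computation
  have hmk : m ≤ k := by omega
  have hcond : ∀ (p : Fin (orderOf c₁) × Fin (orderOf c₂)) (v : Fin n), (v : ℕ) ≤ k →
      ((c₁ ^ ((p.1 : ℕ)) * c₂ ^ ((p.2 : ℕ)))⁻¹ ⟨k, hkn⟩ = v ↔
        (((v : ℕ) < m ∧ (p.1 : ℕ) = 1 ∧ (p.2 : ℕ) = (m - (v : ℕ)) % m) ∨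
         (m ≤ (v : ℕ) ∧ (p.1 : ℕ) = 0 ∧ (p.2 : ℕ) = m - 1 - ((v : ℕ) - m)))) := by
    intro p v hv
    obtain ⟨i, j⟩ := p
    have hi2 : (i : ℕ) < 2 := by have := i.isLt; omega
    have hjm : (j : ℕ) < m := by have := j.isLt; omega
    rw [inv_apply_eq_iff, Equiv.Perm.mul_apply]
    rcases Nat.lt_or_ge (v : ℕ) m with hvm | hvm
    · -- lower block : c₂ ^ j v has value (v + j) % m < m
      have hval : (c₂ ^ ((j : ℕ))) v = ⟨((v : ℕ) + (j : ℕ)) % m, by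
          have := Nat.mod_lt ((v : ℕ) + (j : ℕ)) (show 0 < m by omega); omega⟩ :=
        Fin.ext (hlo _ v hvm)
      rw [hval]
      have hltm : ((v : ℕ) + (j : ℕ)) % m < m := Nat.mod_lt _ (by omega)
      interval_cases hi : (i : ℕ)
      · -- i = 0 : impossible
        rw [pow_zero, Equiv.Perm.one_apply]
        constructor
        · intro h
          have := congrArg Fin.val h
          simp only [Fin.val_mk] at this
          omega
        · intro h
          rcases h with ⟨-, h1, -⟩ | ⟨h1, -, -⟩ <;> omega
      · -- i = 1
        rw [pow_one]
        constructor
        · intro h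
          have h0 := c₁.injective (h.trans hc₁0.symm)
          have h0' := congrArg Fin.val h0
          simp only [Fin.val_mk] at h0'
          left
          exact ⟨hvm, rfl, (modh2 hvm hjm).1 h0'⟩
        · intro h
          rcases h with ⟨-, -, h2⟩ | ⟨h1, -, -⟩
          · have h0' : ((v : ℕ) + (j : ℕ)) % m = 0 := (modh2 hvm hjm).2 h2
            have h0 : (⟨((v : ℕ) + (j : ℕ)) % m, by omega⟩ : Fin n) = ⟨0, h0n⟩ :=
              Fin.ext (by simpa using h0')
            rw [h0, hc₁0]
          · omega
    · -- upper block
      have hv2m : (v : ℕ) < 2 * m := by omega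
      have hval : (c₂ ^ ((j : ℕ))) v = ⟨m + (((v : ℕ) - m + (j : ℕ)) % m), by
          have := Nat.mod_lt ((v : ℕ) - m + (j : ℕ)) (show 0 < m by omega); omega⟩ :=
        Fin.ext (hhi _ v hvm hv2m)
      rw [hval]
      have hsub : (v : ℕ) - m < m := by omega
      interval_cases hi : (i : ℕ)
      · rw [pow_zero, Equiv.Perm.one_apply]
        constructor
        · intro h
          have := congrArg Fin.val h
          simp only [Fin.val_mk] at this
          right
          refine ⟨hvm, rfl, ?_⟩
          exact (modh1 hsub hjm).1 (by omega)
        · intro h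
          rcases h with ⟨h1, -, -⟩ | ⟨-, -, h2⟩
          · omega
          · refine Fin.ext ?_
            simp only [Fin.val_mk]
            have := (modh1 hsub hjm).2 h2
            omega
      · rw [pow_one]
        constructor
        · intro h
          exfalso
          have h0 := c₁.injective (h.trans hc₁0.symm)
          have h0' := congrArg Fin.val h0
          simp only [Fin.val_mk] at h0'
          omega
        · intro h
          rcases h with ⟨h1, -, -⟩ | ⟨-, h1, -⟩ <;> omega
  have hval : ∀ v : Fin n, (v : ℕ) ≤ k →
      ∃! p : Fin (orderOf c₁) × Fin (orderOf c₂),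
        ((fun p : Fin (orderOf c₁) × Fin (orderOf c₂) =>
          c₁ ^ ((p.1 : ℕ)) * c₂ ^ ((p.2 : ℕ))) p)⁻¹ ⟨k, hkn⟩ = v := by
    intro v hv
    rcases Nat.lt_or_ge (v : ℕ) m with hvm | hvm
    · refine ⟨(⟨1, by omega⟩, ⟨(m - (v : ℕ)) % m, by rw [ho₂]; exact Nat.mod_lt _ (by omega)⟩),
        ?_, ?_⟩
      · exact (hcond _ v hv).2 (Or.inl ⟨hvm, rfl, rfl⟩)
      · intro q hq
        have h2 := (hcond q v hv).1 hq
        rcases h2 with ⟨-, h3, h4⟩ | ⟨h3, -, -⟩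
        · exact Prod.ext (Fin.ext (by simpa using h3)) (Fin.ext (by simpa using h4))
        · omega
    · refine ⟨(⟨0, by omega⟩, ⟨m - 1 - ((v : ℕ) - m), by rw [ho₂]; omega⟩), ?_, ?_⟩
      · exact (hcond _ v hv).2 (Or.inr ⟨hvm, rfl, rfl⟩)
      · intro q hq
        have h2 := (hcond q v hv).1 hq
        rcases h2 with ⟨h3, -, -⟩ | ⟨-, h3, h4⟩
        · omega
        · exact Prod.ext (Fin.ext (by simpa using h3)) (Fin.ext (by simpa using h4))
  obtain ⟨I, R⟩ := coset_step hkn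
    (fun p : Fin (orderOf c₁) × Fin (orderOf c₂) => c₁ ^ ((p.1 : ℕ)) * c₂ ^ ((p.2 : ℕ)))
    hsgnt (fun p j hj => hfix p j hj) hval
  have hfunext : (fun p : (Sk n k) × Fin (orderOf c₁) × Fin (orderOf c₂) =>
      (p.1 : Equiv.Perm (Fin n)) * c₁ ^ ((p.2.1 : ℕ)) * c₂ ^ ((p.2.2 : ℕ))) =
      (fun p : (Sk n k) × Fin (orderOf c₁) × Fin (orderOf c₂) =>
      (p.1 : Equiv.Perm (Fin n)) * (c₁ ^ ((p.2.1 : ℕ)) * c₂ ^ ((p.2.2 : ℕ)))) := by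
    funext p
    rw [mul_assoc]
  refine ⟨c₁, c₂, hc₁ne, hc₂ne, hsgn₁, hsgn₂, by omega, ?_, ?_⟩
  · rw [hfunext]; exact I
  · rw [hfunext]; exact R

lemma build (n : ℕ) : ∀ k, 2 ≤ k → k ≤ n → ∃ (m : ℕ) (b : Fin m → Equiv.Perm (Fin n)),
    (∀ i, b i ≠ 1) ∧ (∀ i, Equiv.Perm.sign (b i) = 1) ∧
      Function.Injective (P b) ∧ Set.range (P b) = Sk n k := by
  intro k hk2
  induction k, hk2 using Nat.le_induction with
  | base =>
    intro _
    refine ⟨0, Fin.elim0, fun i => i.elim0, fun i => i.elim0, ?_, ?_⟩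
    · intro a₁ a₂ _
      funext i
      exact i.elim0
    · rw [Sk_two]
      ext σ
      constructor
      · rintro ⟨a, rfl⟩
        show (List.ofFn _).prod = 1
        simp [List.ofFn_zero]
      · rintro rfl
        exact ⟨fun i => i.elim0, by show (List.ofFn _).prod = 1; simp [List.ofFn_zero]⟩
  | succ k hk IH =>
    intro hk1n
    have hkn : k < n := hk1n
    obtain ⟨m, b, hb1, hsgn, hinj, hrange⟩ := IH (by omega)
    rcases Nat.mod_two_eq_zero_or_one k with he | ho
    · obtain ⟨c, hc1, hcs, I, R⟩ := odd_step hk hkn he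
      obtain ⟨I', R'⟩ := ext_step hinj hrange c I R
      refine ⟨m + 1, Fin.snoc b c, ?_, ?_, I', R'⟩
      · intro i
        induction i using Fin.lastCases with
        | last => rw [Fin.snoc_last]; exact hc1
        | cast i => rw [Fin.snoc_castSucc]; exact hb1 i
      · intro i
        induction i using Fin.lastCases with
        | last => rw [Fin.snoc_last]; exact hcs
        | cast i => rw [Fin.snoc_castSucc]; exact hsgn i
    · obtain ⟨c₁, c₂, hc₁ne, hc₂ne, hs₁, hs₂, ho₂, I, R⟩ := even_step hk hkn ho
      obtain ⟨I', R'⟩ := ext_step2 hinj hrange c₁ c₂ ho₂ I R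
      refine ⟨m + 2, Fin.snoc (Fin.snoc b c₁) c₂, ?_, ?_, I', R'⟩
      · intro i
        induction i using Fin.lastCases with
        | last => rw [Fin.snoc_last]; exact hc₂ne
        | cast i =>
          rw [Fin.snoc_castSucc]
          induction i using Fin.lastCases with
          | last => rw [Fin.snoc_last]; exact hc₁ne
          | cast i => rw [Fin.snoc_castSucc]; exact hb1 i
      · intro i
        induction i using Fin.lastCases with
        | last => rw [Fin.snoc_last]; exact hs₂
        | cast i =>
          rw [Fin.snoc_castSucc]
          induction i using Fin.lastCases with
          | last => rw [Fin.snoc_last]; exact hs₁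
          | cast i => rw [Fin.snoc_castSucc]; exact hsgn i

end AltBasis

/-- For every positive integer `n`, the alternating group `Aₙ` has a basis. -/
theorem alternatingGroup_hasGroupBasis (n : ℕ) (hn : 0 < n) :
    HasGroupBasis (alternatingGroup (Fin n)) := by
  by_cases h1 : n < 2
  · refine ⟨0, Fin.elim0, fun i => i.elim0, ?_, ?_⟩
    · intro a₁ a₂ _
      funext i
      exact i.elim0
    · intro g
      refine ⟨fun i => i.elim0, ?_⟩
      have hsub : Subsingleton (Equiv.Perm (Fin n)) :=
        ⟨fun a b => Equiv.ext fun x => by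
          have hx := x.isLt
          have : ∀ y : Fin n, y = ⟨0, by omega⟩ := fun y => Fin.ext (by have := y.isLt; omega)
          rw [this (a x), this (b x)]⟩
      refine Subtype.ext ?_
      have hg : (g : Equiv.Perm (Fin n)) = ((1 : alternatingGroup (Fin n)) : Equiv.Perm (Fin n)) :=
        Subsingleton.elim _ _
      rw [hg]
      simp [List.ofFn_zero]
  · obtain ⟨m, b, hb1, hsgn, hinj, hrange⟩ := AltBasis.build n n (by omega) le_rfl
    have hSk : AltBasis.Sk n n = {σ : Equiv.Perm (Fin n) | Equiv.Perm.sign σ = 1} := by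
      ext σ
      exact ⟨fun h => h.1, fun h => ⟨h, fun j hj => absurd j.isLt (by omega)⟩⟩
    obtain ⟨b', hb'⟩ := AltBasis.lift b hb1 hsgn hinj (hrange.trans hSk)
    exact ⟨m, b', hb'⟩
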